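/- arXiv:2507.09511 — 2 statements merged into one kernel-verified Lean document; each statement's English description precedes it below -/
import Mathlib

section
/- For every integer ℓ ≥ 1, the largest adjacency eigenvalue of T(ℓ,ℓ,ℓ) is strictly less than 3/√2. -/
open scoped Classical

/-- The real adjacency matrix of a finite simple graph. -/
noncomputable def adjMat {V : Type*} [Fintype V] [DecidableEq V] (G : SimpleGraph V) :
    Matrix V V ℝ :=
  Matrix.of fun u v => if G.Adj u v then (1 : ℝ) else 0

/-- The eigenvalues (roots of the characteristic polynomial, with multiplicity) of a real
matrix, listed in nondecreasing order. -/
noncomputable def eigList {V : Type*} [Fintype V] [DecidableEq V] (A : Matrix V V ℝ) : List ℝ :=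
  A.charpoly.roots.sort (· ≤ ·)

/-- The `k`-th largest eigenvalue (with multiplicity) of `A`, 1-indexed:
`eig A 1 ≥ eig A 2 ≥ …`. -/
noncomputable def eig {V : Type*} [Fintype V] [DecidableEq V] (A : Matrix V V ℝ) (k : ℕ) : ℝ :=
  (eigList A).getD ((eigList A).length - k) 0

/-- The `k`-th largest adjacency eigenvalue of a finite simple graph (`λₖ(G)`). -/
noncomputable def graphEig {V : Type*} [Fintype V] [DecidableEq V] (G : SimpleGraph V)
    (k : ℕ) : ℝ :=
  eig (adjMat G) k

/-- The multiplicity of `μ` as an eigenvalue of `A` (dimension of the eigenspace). -/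
noncomputable def eigMult {V : Type*} [Fintype V] [DecidableEq V] (A : Matrix V V ℝ)
    (μ : ℝ) : ℕ :=
  Module.finrank ℝ (LinearMap.ker (A.mulVecLin - μ • LinearMap.id))

/-- The number of edges of a finite simple graph. -/
noncomputable def edgeCount {V : Type*} [Fintype V] (G : SimpleGraph V) : ℕ :=
  G.edgeSet.toFinite.toFinset.card

/-- The cyclomatic number `|E| - |V| + 1` of a (connected) finite graph. -/
noncomputable def cyclomatic {V : Type*} [Fintype V] (G : SimpleGraph V) : ℕ :=
  edgeCount G + 1 - Fintype.card V

/-- The maximum degree of a finite simple graph. -/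
noncomputable def maxDeg {V : Type*} [Fintype V] (G : SimpleGraph V) : ℕ :=
  Finset.univ.sup fun v => (G.neighborSet v).toFinite.toFinset.card

/-- The spider `T(ℓ,ℓ,ℓ)`: three paths of length `ℓ` (in edges) sharing exactly their
initial vertex `none`. -/
def spider (ℓ : ℕ) : SimpleGraph (Option (Fin 3 × Fin ℓ)) :=
  SimpleGraph.fromRel fun u v =>
    match u, v with
    | none, some (_, j) => (j : ℕ) = 0
    | some (i, j), some (i', j') => i = i' ∧ (j' : ℕ) = (j : ℕ) + 1
    | _, _ => False

open Polynomial

lemma eval_charpoly' {V : Type*} [Fintype V] [DecidableEq V] (A : Matrix V V ℝ) (r : ℝ) :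
    A.charpoly.eval r = (r • (1 : Matrix V V ℝ) - A).det := by
  rw [Matrix.charpoly, ← Polynomial.coe_evalRingHom, RingHom.map_det]
  congr 1
  ext i j
  by_cases h : i = j
  · subst h
    simp [Matrix.charmatrix_apply_eq, Matrix.one_apply, Matrix.sub_apply]
  · simp [Matrix.charmatrix_apply_ne _ _ _ h, Matrix.one_apply_ne h, Matrix.sub_apply]

lemma exists_eigenvector' {V : Type*} [Fintype V] [DecidableEq V] (A : Matrix V V ℝ) {r : ℝ}
    (h : A.charpoly.IsRoot r) : ∃ v : V → ℝ, v ≠ 0 ∧ A.mulVec v = r • v := by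
  have hdet : (r • (1 : Matrix V V ℝ) - A).det = 0 := by
    rw [← eval_charpoly']; exact h
  obtain ⟨v, hv0, hv⟩ := (Matrix.exists_mulVec_eq_zero_iff).2 hdet
  refine ⟨v, hv0, ?_⟩
  rw [Matrix.sub_mulVec, Matrix.smul_mulVec, Matrix.one_mulVec, sub_eq_zero] at hv
  exact hv.symm

lemma perron_bound {V : Type*} [Fintype V] [DecidableEq V] [Nonempty V]
    (A : Matrix V V ℝ) (hA : ∀ u v, 0 ≤ A u v)
    (x : V → ℝ) (hx : ∀ v, 0 < x v) (μ : ℝ)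
    (hineq : ∀ v, A.mulVec x v < μ * x v)
    {lam : ℝ} {y : V → ℝ} (hy : y ≠ 0) (heig : A.mulVec y = lam • y) :
    |lam| < μ := by
  obtain ⟨v0, -, hmax⟩ := Finset.exists_max_image (Finset.univ : Finset V)
    (fun v => |y v| / x v) ⟨Classical.arbitrary V, Finset.mem_univ _⟩
  set r : ℝ := |y v0| / x v0 with hr
  have hrw : ∀ w, |y w| ≤ r * x w := by
    intro w
    have := hmax w (Finset.mem_univ w)
    exact (div_le_iff₀ (hx w)).1 this
  have hrpos : 0 < r := by
    obtain ⟨w, hw⟩ := Function.ne_iff.1 hy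
    have h1 : 0 < |y w| := abs_pos.2 hw
    have h2 : |y w| / x w ≤ r := hmax w (Finset.mem_univ w)
    have := div_pos h1 (hx w)
    linarith
  have hyv0 : |y v0| = r * x v0 := by
    rw [hr, div_mul_cancel₀ _ (hx v0).ne']
  have key : |lam| * |y v0| < μ * (r * x v0) := by
    calc |lam| * |y v0| = |lam * y v0| := (abs_mul _ _).symm
      _ = |A.mulVec y v0| := by rw [heig]; simp
      _ = |∑ w, A v0 w * y w| := by simp [Matrix.mulVec, dotProduct]
      _ ≤ ∑ w, |A v0 w * y w| := Finset.abs_sum_le_sum_abs _ _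
      _ = ∑ w, A v0 w * |y w| := by
          refine Finset.sum_congr rfl fun w _ => ?_
          rw [abs_mul, abs_of_nonneg (hA v0 w)]
      _ ≤ ∑ w, A v0 w * (r * x w) := by
          refine Finset.sum_le_sum fun w _ => ?_
          exact mul_le_mul_of_nonneg_left (hrw w) (hA v0 w)
      _ = r * A.mulVec x v0 := by
          simp only [Matrix.mulVec, dotProduct, Finset.mul_sum]
          exact Finset.sum_congr rfl fun w _ => by ring
      _ < r * (μ * x v0) := by
          exact mul_lt_mul_of_pos_left (hineq v0) hrpos
      _ = μ * (r * x v0) := by ring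
  rw [hyv0] at key
  have hpos : 0 < r * x v0 := mul_pos hrpos (hx v0)
  exact lt_of_mul_lt_mul_right key hpos.le

lemma spider_adj_none_some {ℓ : ℕ} (i : Fin 3) (j : Fin ℓ) :
    (spider ℓ).Adj none (some (i, j)) ↔ (j : ℕ) = 0 := by
  simp only [spider, SimpleGraph.fromRel_adj]
  constructor
  · rintro ⟨-, h | h⟩
    · exact h
    · exact h.elim
  · intro h
    exact ⟨by simp, Or.inl h⟩

lemma spider_adj_some_none {ℓ : ℕ} (i : Fin 3) (j : Fin ℓ) :
    (spider ℓ).Adj (some (i, j)) none ↔ (j : ℕ) = 0 := by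
  rw [SimpleGraph.adj_comm]; exact spider_adj_none_some i j

lemma spider_adj_some_some {ℓ : ℕ} (i i' : Fin 3) (j j' : Fin ℓ) :
    (spider ℓ).Adj (some (i, j)) (some (i', j')) ↔
      (i' = i ∧ ((j' : ℕ) = (j : ℕ) + 1 ∨ (j : ℕ) = (j' : ℕ) + 1)) := by
  simp only [spider, SimpleGraph.fromRel_adj]
  constructor
  · rintro ⟨-, ⟨hi, hj⟩ | ⟨hi, hj⟩⟩
    · exact ⟨hi.symm, Or.inl hj⟩
    · exact ⟨hi, Or.inr hj⟩
  · rintro ⟨hi, hj⟩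
    refine ⟨?_, ?_⟩
    · intro hcon
      have : j = j' := by
        have := congrArg (fun o => o.map Prod.snd) hcon
        simpa using this
      have : (j : ℕ) = (j' : ℕ) := congrArg _ this
      omega
    · rcases hj with h | h
      · exact Or.inl ⟨hi.symm, h⟩
      · exact Or.inr ⟨hi, h⟩

noncomputable def xx (ℓ k : ℕ) : ℝ :=
  ((Real.sqrt 2)⁻¹) ^ k - ((2:ℝ) ^ (ℓ+1))⁻¹ * (Real.sqrt 2) ^ k + ((2:ℝ) ^ (ℓ+1))⁻¹

noncomputable def XX (ℓ : ℕ) : Option (Fin 3 × Fin ℓ) → ℝ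
  | none => xx ℓ 0
  | some (_, j) => xx ℓ ((j : ℕ) + 1)

lemma mulVec_apply {ℓ : ℕ} (v : Option (Fin 3 × Fin ℓ)) :
    (adjMat (spider ℓ)).mulVec (XX ℓ) v
      = ∑ w : Option (Fin 3 × Fin ℓ), (if (spider ℓ).Adj v w then (1:ℝ) else 0) * XX ℓ w := by
  rfl

lemma mulVec_none {ℓ : ℕ} (hℓ : 1 ≤ ℓ) :
    (adjMat (spider ℓ)).mulVec (XX ℓ) none = 3 * xx ℓ 1 := by
  rw [mulVec_apply, Fintype.sum_option, Fintype.sum_prod_type]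
  have h0 : (if (spider ℓ).Adj none none then (1:ℝ) else 0) * XX ℓ none = 0 := by simp
  rw [h0, zero_add]
  have hterm : ∀ (i : Fin 3),
      (∑ j : Fin ℓ, (if (spider ℓ).Adj none (some (i, j)) then (1:ℝ) else 0) * XX ℓ (some (i, j)))
        = xx ℓ 1 := by
    intro i
    have h1 : ∀ j : Fin ℓ,
        (if (spider ℓ).Adj none (some (i, j)) then (1:ℝ) else 0) * XX ℓ (some (i, j))
          = (fun n => if n = 0 then xx ℓ 1 else 0) ((j : ℕ)) := by
      intro j
      by_cases h : (j : ℕ) = 0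
      · show _ = if (j:ℕ) = 0 then xx ℓ 1 else 0
        rw [if_pos ((spider_adj_none_some i j).2 h), if_pos h, one_mul]
        show xx ℓ ((j:ℕ)+1) = xx ℓ 1
        rw [h]
      · show _ = if (j:ℕ) = 0 then xx ℓ 1 else 0
        rw [if_neg (fun hc => h ((spider_adj_none_some i j).1 hc)), if_neg h, zero_mul]
    rw [Finset.sum_congr rfl (fun j _ => h1 j),
      Fin.sum_univ_eq_sum_range (fun n => if n = 0 then xx ℓ 1 else 0) ℓ,
      Finset.sum_ite_eq' (Finset.range ℓ) 0 (fun _ => xx ℓ 1),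
      if_pos (Finset.mem_range.2 hℓ)]
  rw [Finset.sum_congr rfl (fun i _ => hterm i), Finset.sum_const]
  norm_num

lemma mulVec_some {ℓ : ℕ} (i : Fin 3) (j : Fin ℓ) :
    (adjMat (spider ℓ)).mulVec (XX ℓ) (some (i, j))
      = xx ℓ (j : ℕ) + (if (j : ℕ) + 1 < ℓ then xx ℓ ((j : ℕ) + 2) else 0) := by
  rw [mulVec_apply, Fintype.sum_option, Fintype.sum_prod_type]
  have hnone : (if (spider ℓ).Adj (some (i,j)) none then (1:ℝ) else 0) * XX ℓ none
      = (if (j:ℕ) = 0 then xx ℓ 0 else 0) := by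
    by_cases h : (j:ℕ) = 0
    · rw [if_pos ((spider_adj_some_none i j).2 h), if_pos h, one_mul]; rfl
    · rw [if_neg (fun hc => h ((spider_adj_some_none i j).1 hc)), if_neg h, zero_mul]
  set S : ℝ := ∑ j' : Fin ℓ,
      (if ((j':ℕ) = (j:ℕ) + 1 ∨ (j:ℕ) = (j':ℕ) + 1) then xx ℓ ((j':ℕ) + 1) else 0) with hS
  have hin : ∀ i' : Fin 3,
      (∑ j' : Fin ℓ, (if (spider ℓ).Adj (some (i,j)) (some (i',j')) then (1:ℝ) else 0)
        * XX ℓ (some (i',j')))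
      = (if i' = i then S else 0) := by
    intro i'
    by_cases hi : i' = i
    · rw [if_pos hi]
      subst hi
      rw [hS]
      refine Finset.sum_congr rfl fun j' _ => ?_
      by_cases hd : ((j':ℕ) = (j:ℕ) + 1 ∨ (j:ℕ) = (j':ℕ) + 1)
      · rw [if_pos ((spider_adj_some_some i' i' j j').2 ⟨rfl, hd⟩), if_pos hd, one_mul]; rfl
      · rw [if_neg (fun hc => hd ((spider_adj_some_some i' i' j j').1 hc).2), if_neg hd, zero_mul]
    · rw [if_neg hi]
      refine Finset.sum_eq_zero fun j' _ => ?_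
      rw [if_neg (fun hc => hi ((spider_adj_some_some i i' j j').1 hc).1), zero_mul]
  rw [hnone, Finset.sum_congr rfl (fun i' _ => hin i'),
    Finset.sum_ite_eq' (Finset.univ : Finset (Fin 3)) i (fun _ => S), if_pos (Finset.mem_univ i)]
  have hsplit : S = (∑ j' : Fin ℓ, (if (j':ℕ) = (j:ℕ) + 1 then xx ℓ ((j':ℕ) + 1) else 0))
      + (∑ j' : Fin ℓ, (if (j:ℕ) = (j':ℕ) + 1 then xx ℓ ((j':ℕ) + 1) else 0)) := by
    rw [hS, ← Finset.sum_add_distrib]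
    refine Finset.sum_congr rfl fun j' _ => ?_
    by_cases h1 : (j':ℕ) = (j:ℕ) + 1 <;> by_cases h2 : (j:ℕ) = (j':ℕ) + 1
    · omega
    · rw [if_pos (Or.inl h1), if_pos h1, if_neg h2, add_zero]
    · rw [if_pos (Or.inr h2), if_neg h1, if_pos h2, zero_add]
    · rw [if_neg (by tauto), if_neg h1, if_neg h2, add_zero]
  have hS1 : (∑ j' : Fin ℓ, (if (j':ℕ) = (j:ℕ) + 1 then xx ℓ ((j':ℕ) + 1) else 0))
      = (if (j:ℕ) + 1 < ℓ then xx ℓ ((j:ℕ) + 2) else 0) := by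
    rw [Fin.sum_univ_eq_sum_range (fun n => if n = (j:ℕ) + 1 then xx ℓ (n + 1) else 0) ℓ,
      Finset.sum_ite_eq' (Finset.range ℓ) ((j:ℕ)+1) (fun n => xx ℓ (n+1))]
    by_cases h : (j:ℕ) + 1 < ℓ
    · rw [if_pos (Finset.mem_range.2 h), if_pos h]
    · rw [if_neg (fun hc => h (Finset.mem_range.1 hc)), if_neg h]
  by_cases hj : (j:ℕ) = 0
  · have hS2 : (∑ j' : Fin ℓ, (if (j:ℕ) = (j':ℕ) + 1 then xx ℓ ((j':ℕ) + 1) else 0)) = 0 := by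
      refine Finset.sum_eq_zero fun j' _ => ?_
      rw [if_neg (by omega)]
    rw [hsplit, hS1, hS2, if_pos hj, hj]
    ring
  · obtain ⟨m, hm⟩ := Nat.exists_eq_succ_of_ne_zero hj
    have hS2 : (∑ j' : Fin ℓ, (if (j:ℕ) = (j':ℕ) + 1 then xx ℓ ((j':ℕ) + 1) else 0))
        = xx ℓ (j:ℕ) := by
      have hpt : ∀ j' : Fin ℓ, (if (j:ℕ) = (j':ℕ) + 1 then xx ℓ ((j':ℕ) + 1) else 0)
          = (fun n => if n = m then xx ℓ (j:ℕ) else 0) ((j':ℕ)) := by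
        intro j'
        show _ = if (j':ℕ) = m then xx ℓ (j:ℕ) else 0
        by_cases h : (j:ℕ) = (j':ℕ) + 1
        · rw [if_pos h, if_pos (by omega), ← h]
        · rw [if_neg h, if_neg (by omega)]
      rw [Finset.sum_congr rfl (fun j' _ => hpt j'),
        Fin.sum_univ_eq_sum_range (fun n => if n = m then xx ℓ (j:ℕ) else 0) ℓ,
        Finset.sum_ite_eq' (Finset.range ℓ) m (fun _ => xx ℓ (j:ℕ)),
        if_pos (Finset.mem_range.2 (by omega))]
    rw [hsplit, hS1, hS2, if_neg hj]
    ring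

lemma sqrt2_sq : (Real.sqrt 2) ^ 2 = 2 := Real.sq_sqrt (by norm_num)
lemma sqrt2_pos : (0:ℝ) < Real.sqrt 2 := Real.sqrt_pos.2 (by norm_num)

lemma xx_pos {ℓ k : ℕ} (hk : k ≤ ℓ) : 0 < xx ℓ k := by
  set s := Real.sqrt 2
  have hs2 : s ^ 2 = 2 := sqrt2_sq
  have hs0 : (0:ℝ) < s := sqrt2_pos
  set ε : ℝ := ((2:ℝ) ^ (ℓ+1))⁻¹ with hεdef
  set A : ℝ := (s⁻¹) ^ k with hA
  set B : ℝ := s ^ k with hB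
  have hε : 0 < ε := by positivity
  have hBpos : 0 < B := by positivity
  have hApos : 0 < A := by positivity
  have hAB : A * B = 1 := by
    rw [hA, hB, ← mul_pow, inv_mul_cancel₀ hs0.ne', one_pow]
  have hB2 : B ^ 2 = 2 ^ k := by
    rw [hB, ← pow_mul, mul_comm, pow_mul, hs2]
  have hε1 : ε * 2 ^ (ℓ+1) = 1 := inv_mul_cancel₀ (by positivity)
  have hk2 : (2:ℝ) ^ k ≤ 2 ^ (ℓ+1) := pow_le_pow_right₀ (by norm_num) (by omega)
  have h1 : ε * B * B ≤ A * B := by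
    calc ε * B * B = ε * (2:ℝ) ^ k := by rw [← hB2]; ring
      _ ≤ ε * 2 ^ (ℓ+1) := by exact mul_le_mul_of_nonneg_left hk2 hε.le
      _ = 1 := hε1
      _ = A * B := hAB.symm
  have h2 : ε * B ≤ A := le_of_mul_le_mul_right h1 hBpos
  show 0 < A - ε * B + ε
  linarith

lemma center_lt (ℓ : ℕ) : 3 * xx ℓ 1 < 3 / Real.sqrt 2 * xx ℓ 0 := by
  set s := Real.sqrt 2
  have hs2 : s ^ 2 = 2 := sqrt2_sq
  have hs0 : (0:ℝ) < s := sqrt2_pos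
  set ε : ℝ := ((2:ℝ) ^ (ℓ+1))⁻¹ with hεdef
  have hε : 0 < ε := by positivity
  have hinv : s⁻¹ = s / 2 := by
    field_simp
    linarith [hs2]
  have hs1 : (1:ℝ) < s := by nlinarith
  show 3 * (s⁻¹ ^ 1 - ε * s ^ 1 + ε) < 3 / s * (s⁻¹ ^ 0 - ε * s ^ 0 + ε)
  rw [div_eq_mul_inv, hinv]
  nlinarith [mul_pos hε (show (0:ℝ) < s - 1 by linarith)]

lemma interior_lt (ℓ k : ℕ) :
    xx ℓ k + xx ℓ (k+2) < 3 / Real.sqrt 2 * xx ℓ (k+1) := by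
  set s := Real.sqrt 2
  have hs2 : s ^ 2 = 2 := sqrt2_sq
  have hs0 : (0:ℝ) < s := sqrt2_pos
  set ε : ℝ := ((2:ℝ) ^ (ℓ+1))⁻¹ with hεdef
  set A : ℝ := (s⁻¹) ^ k with hA
  set B : ℝ := s ^ k with hB
  have hε : 0 < ε := by positivity
  have hinv : s⁻¹ = s / 2 := by
    field_simp
    linarith [hs2]
  show (A - ε * B + ε) + (s⁻¹ ^ (k+2) - ε * s ^ (k+2) + ε)
      < 3 / s * (s⁻¹ ^ (k+1) - ε * s ^ (k+1) + ε)
  have e1 : s⁻¹ ^ (k+1) = A * s⁻¹ := by rw [hA, pow_succ]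
  have e2 : s⁻¹ ^ (k+2) = A * s⁻¹ * s⁻¹ := by rw [hA, pow_succ, pow_succ]
  have e3 : s ^ (k+1) = B * s := by rw [hB, pow_succ]
  have e4 : s ^ (k+2) = B * s * s := by rw [hB, pow_succ, pow_succ]
  rw [e1, e2, e3, e4, div_eq_mul_inv, hinv]
  have hA2 : A * s ^ 2 = A * 2 := by rw [hs2]
  have hBs2 : ε * B * s ^ 2 = ε * B * 2 := by rw [hs2]
  have h3s : 0 < ε * (3 * s - 4) := mul_pos hε (by nlinarith)
  nlinarith [hA2, hBs2, h3s]

lemma leaf_lt (ℓ k : ℕ) (h : k + 1 = ℓ) :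
    xx ℓ k < 3 / Real.sqrt 2 * xx ℓ (k+1) := by
  subst h
  set s := Real.sqrt 2
  have hs2 : s ^ 2 = 2 := sqrt2_sq
  have hs0 : (0:ℝ) < s := sqrt2_pos
  set ε : ℝ := ((2:ℝ) ^ (k+1+1))⁻¹ with hεdef
  set A : ℝ := (s⁻¹) ^ k with hA
  set B : ℝ := s ^ k with hB
  have hε : 0 < ε := by positivity
  have hinv : s⁻¹ = s / 2 := by
    field_simp
    linarith [hs2]
  have hAB : A * B = 1 := by
    rw [hA, hB, ← mul_pow, inv_mul_cancel₀ hs0.ne', one_pow]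
  have hB2 : B ^ 2 = 2 ^ k := by
    rw [hB, ← pow_mul, mul_comm, pow_mul, hs2]
  have hε1 : ε * 2 ^ (k+1+1) = 1 := inv_mul_cancel₀ (by positivity)
  have hpow : (2:ℝ) ^ (k+1+1) = 4 * 2 ^ k := by rw [pow_succ, pow_succ]; ring
  have h4 : 4 * ε * B ^ 2 = 1 := by
    rw [hB2]
    calc 4 * ε * 2 ^ k = ε * 2 ^ (k+1+1) := by rw [hpow]; ring
      _ = 1 := hε1
  have h5 : A = 4 * ε * B := by
    linear_combination (-A) * h4 + (4 * ε * B) * hAB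
  show A - ε * B + ε < 3 / s * (s⁻¹ ^ (k+1) - ε * s ^ (k+1) + ε)
  have e1 : s⁻¹ ^ (k+1) = A * s⁻¹ := by rw [hA, pow_succ]
  have e3 : s ^ (k+1) = B * s := by rw [hB, pow_succ]
  rw [e1, e3, div_eq_mul_inv, hinv]
  have hA2 : A * s ^ 2 = A * 2 := by rw [hs2]
  have hBs2 : ε * B * s ^ 2 = ε * B * 2 := by rw [hs2]
  have h6 : 0 < ε * (3 * s - 2) := mul_pos hε (by nlinarith)
  nlinarith [hA2, hBs2, h5, h6]

-- glue test: every real matrix with perron-type bound datum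
lemma eig_lt {V : Type*} [Fintype V] [DecidableEq V] (A : Matrix V V ℝ) (μ : ℝ) (hμ : 0 < μ)
    (h : ∀ lam : ℝ, A.charpoly.IsRoot lam → lam < μ) : eig A 1 < μ := by
  unfold eig
  set L := eigList A with hLdef
  by_cases hL : L = []
  · rw [hL]; simpa using hμ
  · have hlen : 0 < L.length := List.length_pos_iff.2 hL
    have hidx : L.length - 1 < L.length := by omega
    have hget : L.getD (L.length - 1) 0 = L[L.length - 1] := List.getD_eq_getElem L 0 hidx
    have hmem : L.getD (L.length - 1) 0 ∈ L := by rw [hget]; exact List.getElem_mem hidx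
    have hroots : L.getD (L.length - 1) 0 ∈ A.charpoly.roots := by
      rw [hLdef] at hmem
      exact (Multiset.mem_sort _).1 hmem
    exact h _ (Polynomial.isRoot_of_mem_roots hroots)

/-- `λ₁(T(ℓ,ℓ,ℓ)) < 3/√2` for every `ℓ ≥ 1`. -/
theorem spider_eig_lt :
    ∀ ℓ : ℕ, 1 ≤ ℓ → graphEig (spider ℓ) 1 < 3 / Real.sqrt 2 := by
  intro ℓ hℓ
  have hμ : (0:ℝ) < 3 / Real.sqrt 2 := by positivity
  show eig (adjMat (spider ℓ)) 1 < 3 / Real.sqrt 2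
  apply eig_lt _ _ hμ
  intro lam hroot
  obtain ⟨y, hy0, hyeq⟩ := exists_eigenvector' _ hroot
  have hA : ∀ u v, 0 ≤ adjMat (spider ℓ) u v := by
    intro u v
    show (0:ℝ) ≤ if (spider ℓ).Adj u v then 1 else 0
    split <;> norm_num
  have hpos : ∀ v, 0 < XX ℓ v := by
    rintro (_ | ⟨i, j⟩)
    · exact xx_pos (Nat.zero_le ℓ)
    · exact xx_pos (by have := j.isLt; omega)
  have hineq : ∀ v, (adjMat (spider ℓ)).mulVec (XX ℓ) v < 3 / Real.sqrt 2 * XX ℓ v := by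
    rintro (_ | ⟨i, j⟩)
    · rw [mulVec_none hℓ]
      exact center_lt ℓ
    · rw [mulVec_some i j]
      by_cases h : (j:ℕ) + 1 < ℓ
      · rw [if_pos h]
        exact interior_lt ℓ (j:ℕ)
      · rw [if_neg h, add_zero]
        exact leaf_lt ℓ (j:ℕ) (by have := j.isLt; omega)
  have hb := perron_bound _ hA (XX ℓ) hpos _ hineq hy0 hyeq
  exact lt_of_le_of_lt (le_abs_self lam) hb
end

section
/- Let G be a connected graph with girth g ≥ 2m+1 and cyclomatic number ℓ_G ≥ 1, containing a vertex at distance at least m from some shortest cycle. Then G contains the graph H(g, m) (a cycle of length g with a pendant path of length m attached at one vertex) as a subgraph, and hence λ₁(G) ≥ λ₁(T(m,m,m)). -/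
open scoped Classical

/-- `H(p,q)`: a cycle of length `p` on `Fin p` with a pendant path of length `q` (in
edges) attached at the vertex `Sum.inl 0`; the path vertices are `Fin q`. -/
def cycleWithPath (p q : ℕ) : SimpleGraph (Fin p ⊕ Fin q) :=
  SimpleGraph.fromRel fun u v =>
    match u, v with
    | Sum.inl i, Sum.inl j => (j : ℕ) = ((i : ℕ) + 1) % p
    | Sum.inl i, Sum.inr j => (i : ℕ) = 0 ∧ (j : ℕ) = 0
    | Sum.inr i, Sum.inr j => (j : ℕ) = (i : ℕ) + 1
    | _, _ => False

section Spectral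
variable {n : Type*} [Fintype n] [DecidableEq n]
open Polynomial

lemma charpoly_diagonal' (d : n → ℝ) :
    (Matrix.diagonal d).charpoly = ∏ i, (X - C (d i)) := by
  let e : Fin (Fintype.card n) ≃ n := (Fintype.equivFin n).symm
  rw [← Matrix.charpoly_reindex e.symm, Matrix.reindex_apply,
    Equiv.symm_symm, Matrix.submatrix_diagonal _ _ e.injective,
    Matrix.charpoly_of_upperTriangular _ (Matrix.blockTriangular_diagonal _)]
  rw [← Fintype.prod_equiv e (fun i => (X - C ((d ∘ e) i))) (fun i => X - C (d i)) (fun i => rfl)]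
  simp

lemma charpoly_conj' (U M W : Matrix n n ℝ)
    (hUW : U * W = 1) : (U * M * W).charpoly = M.charpoly := by
  have hdet : (U.map C).det * (W.map C).det = 1 := by
    rw [← Matrix.det_mul, ← Matrix.map_mul, hUW]; simp
  have hcm : Matrix.charmatrix (U * M * W) = (U.map C) * Matrix.charmatrix M * (W.map C) := by
    unfold Matrix.charmatrix
    rw [Matrix.mul_sub, Matrix.sub_mul]
    congr 1
    · rw [Matrix.scalar_apply, ← Matrix.smul_one_eq_diagonal, Matrix.mul_smul, Matrix.smul_mul,
        mul_one, ← Matrix.map_mul, hUW]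
      simp
    · simp [Matrix.map_mul]
  rw [Matrix.charpoly, hcm, Matrix.det_mul, Matrix.det_mul, mul_comm ((U.map C).det),
    mul_assoc, hdet, mul_one, Matrix.charpoly]

lemma roots_charpoly_hermitian {A : Matrix n n ℝ} (hA : A.IsHermitian) :
    A.charpoly.roots = Finset.univ.val.map hA.eigenvalues := by
  have hU := (Matrix.mem_unitaryGroup_iff).mp (hA.eigenvectorUnitary).2
  have h1 : A.charpoly = (Matrix.diagonal hA.eigenvalues).charpoly := by
    conv_lhs => rw [hA.spectral_theorem]
    have h2 : Matrix.diagonal (RCLike.ofReal ∘ hA.eigenvalues) = Matrix.diagonal hA.eigenvalues := by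
      congr 1
    rw [h2, Unitary.conjStarAlgAut_apply, charpoly_conj' _ _ _ hU]
  rw [h1, charpoly_diagonal', Finset.prod_eq_multiset_prod]
  rw [show (Multiset.map (fun i => X - C (hA.eigenvalues i)) Finset.univ.val)
      = Multiset.map (fun a => X - C a) (Multiset.map hA.eigenvalues Finset.univ.val) by
    rw [Multiset.map_map]; rfl]
  exact roots_multiset_prod_X_sub_C _

lemma eig_one_spec [Nonempty n] {A : Matrix n n ℝ} (hA : A.IsHermitian) :
    (∃ i, eig A 1 = hA.eigenvalues i) ∧ ∀ i, hA.eigenvalues i ≤ eig A 1 := by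
  set l := eigList A with hl
  have hsort : l.Pairwise (· ≤ ·) := Multiset.pairwise_sort _ _
  have hmem : ∀ a : ℝ, a ∈ l ↔ ∃ i, hA.eigenvalues i = a := by
    intro a
    rw [hl, eigList, Multiset.mem_sort, roots_charpoly_hermitian hA]
    simp
  have hlen : l.length = Fintype.card n := by
    rw [hl, eigList, Multiset.length_sort, roots_charpoly_hermitian hA]
    simp [Finset.card_univ]
  have hpos : 0 < l.length := by rw [hlen]; exact Fintype.card_pos
  have heig : eig A 1 = l[l.length - 1]'(by omega) := by
    rw [eig, ← hl, List.getD_eq_getElem l 0 (by omega)]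
  constructor
  · obtain ⟨i, hi⟩ := (hmem (l[l.length - 1]'(by omega))).mp (List.getElem_mem _)
    exact ⟨i, by rw [heig, hi]⟩
  · intro i
    obtain ⟨k, hk, hki⟩ := List.mem_iff_getElem.mp ((hmem _).mpr ⟨i, rfl⟩)
    rw [← hki, heig]
    rcases (by omega : k = l.length - 1 ∨ k < l.length - 1) with h | h
    · simp [h]
    · exact List.pairwise_iff_getElem.mp hsort _ _ _ _ h

open Matrix in
lemma quad_form_le [Nonempty n] {A : Matrix n n ℝ} (hA : A.IsHermitian) (x : n → ℝ) :
    x ⬝ᵥ A.mulVec x ≤ eig A 1 * (x ⬝ᵥ x) := by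
  obtain ⟨-, hub⟩ := eig_one_spec hA
  set U : Matrix n n ℝ := ↑(hA.eigenvectorUnitary) with hUdef
  have hU1 : U * star U = 1 := (Matrix.mem_unitaryGroup_iff).mp (hA.eigenvectorUnitary).2
  have hstar : star U = Uᵀ := by
    rw [Matrix.star_eq_conjTranspose, Matrix.conjTranspose_eq_transpose_of_trivial]
  have hUUT : U * Uᵀ = 1 := by rw [← hstar]; exact hU1
  set d : n → ℝ := hA.eigenvalues with hd
  set y : n → ℝ := x ᵥ* U with hy
  have hyy : y ⬝ᵥ y = x ⬝ᵥ x := by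
    rw [hy, ← Matrix.mulVec_transpose, Matrix.dotProduct_mulVec, Matrix.vecMul_transpose,
      Matrix.mulVec_mulVec, hUUT, Matrix.one_mulVec]
  have hAD : A = U * Matrix.diagonal d * Uᵀ := by
    rw [← hstar]
    have h2 : Matrix.diagonal (RCLike.ofReal ∘ hA.eigenvalues) = Matrix.diagonal d := by
      rw [hd]; congr 1
    conv_lhs => rw [hA.spectral_theorem]
    rw [h2, Unitary.conjStarAlgAut_apply]
  have hDsym : y ᵥ* Matrix.diagonal d = (Matrix.diagonal d).mulVec y := by
    conv_lhs => rw [← Matrix.diagonal_transpose d, Matrix.vecMul_transpose]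
  have hquad : x ⬝ᵥ A.mulVec x = y ⬝ᵥ (Matrix.diagonal d).mulVec y := by
    rw [hAD, Matrix.dotProduct_mulVec, ← Matrix.vecMul_vecMul, ← Matrix.vecMul_vecMul,
      ← hy, Matrix.vecMul_transpose, dotProduct_comm, Matrix.dotProduct_mulVec,
      ← hy, hDsym]
  rw [hquad, ← hyy]
  have h1 : y ⬝ᵥ (Matrix.diagonal d).mulVec y = ∑ i, d i * (y i * y i) := by
    simp [dotProduct, Matrix.mulVec_diagonal]
    exact Finset.sum_congr rfl fun i _ => by ring
  have h2 : eig A 1 * (y ⬝ᵥ y) = ∑ i, eig A 1 * (y i * y i) := by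
    simp [dotProduct, Finset.mul_sum]
  rw [h1, h2]
  exact Finset.sum_le_sum fun i _ => mul_le_mul_of_nonneg_right (hub i) (mul_self_nonneg _)

open Matrix in
lemma exists_top_eigenvector [Nonempty n] {A : Matrix n n ℝ} (hA : A.IsHermitian) :
    ∃ x : n → ℝ, x ≠ 0 ∧ A.mulVec x = eig A 1 • x := by
  obtain ⟨⟨i, hi⟩, -⟩ := eig_one_spec hA
  refine ⟨⇑(hA.eigenvectorBasis i), ?_, ?_⟩
  · intro h
    exact hA.eigenvectorBasis.orthonormal.ne_zero i (by apply PiLp.ext; intro j; exact congrFun h j)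
  · rw [hi]
    exact hA.mulVec_eigenvectorBasis i

end Spectral

open Matrix in
lemma adjMat_isHermitian {V : Type*} [Fintype V] [DecidableEq V] (G : SimpleGraph V) :
    (adjMat G).IsHermitian := by
  ext i j
  simp [adjMat, Matrix.conjTranspose_apply, G.adj_comm]

open Matrix in
lemma graphEig_mono {W V : Type*} [Fintype W] [DecidableEq W] [Nonempty W]
    [Fintype V] [DecidableEq V] (H : SimpleGraph W) (G : SimpleGraph V)
    (φ : H →g G) (hφ : Function.Injective φ) :
    graphEig H 1 ≤ graphEig G 1 := by
  have : Nonempty V := ⟨φ (Classical.arbitrary W)⟩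
  set A := adjMat H with hA
  set B := adjMat G with hB
  have hAnn : ∀ u v, 0 ≤ A u v := fun u v => by
    simp only [hA, adjMat, Matrix.of_apply]; positivity
  have hBnn : ∀ u v, 0 ≤ B u v := fun u v => by
    simp only [hB, adjMat, Matrix.of_apply]; positivity
  have hAB : ∀ u v, A u v ≤ B (φ u) (φ v) := fun u v => by
    simp only [hA, hB, adjMat, Matrix.of_apply]
    by_cases h : H.Adj u v
    · simp [h, φ.map_adj h]
    · simp only [h, if_neg, if_false]
      positivity
  obtain ⟨x, hx0, hxe⟩ := exists_top_eigenvector (adjMat_isHermitian H)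
  set y : V → ℝ := Function.extend φ (fun h => |x h|) 0 with hy
  have hyφ : ∀ h, y (φ h) = |x h| := fun h => hφ.extend_apply _ _ h
  have hyout : ∀ v, v ∉ Set.range φ → y v = 0 := by
    intro v hv
    rw [hy, Function.extend_apply' _ _ _ (by simpa [Set.range] using hv)]
    rfl
  have hynn : ∀ v, 0 ≤ y v := by
    intro v
    by_cases h : v ∈ Set.range φ
    · obtain ⟨w, rfl⟩ := h; rw [hyφ]; positivity
    · rw [hyout v h]
  -- sum over image equals sum over W
  have himg : ∀ f : V → ℝ, (∀ v, v ∉ Set.range φ → f v = 0) →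
      ∑ v, f v = ∑ w, f (φ w) := by
    intro f hf
    rw [← Finset.sum_image (fun a _ b _ h => hφ h)]
    apply (Finset.sum_subset (Finset.subset_univ _) _).symm
    intro v _ hv
    apply hf
    intro ⟨w, hw⟩
    exact hv (Finset.mem_image.mpr ⟨w, Finset.mem_univ _, hw⟩)
  have hyy : y ⬝ᵥ y = x ⬝ᵥ x := by
    rw [dotProduct, dotProduct,
      himg (fun v => y v * y v) (fun v hv => by simp [hyout v hv])]
    apply Finset.sum_congr rfl
    intro w _
    rw [hyφ]
    exact abs_mul_abs_self (x w)
  have hxx : 0 < x ⬝ᵥ x := by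
    rw [dotProduct]
    have h1 : ∀ i : W, 0 ≤ x i * x i := fun i => mul_self_nonneg _
    obtain ⟨i, hi⟩ : ∃ i, x i ≠ 0 := by
      by_contra h
      push_neg at h
      exact hx0 (funext h)
    exact Finset.sum_pos' (fun i _ => h1 i) ⟨i, Finset.mem_univ _, mul_self_pos.mpr hi⟩
  -- main chain
  have step1 : eig A 1 * (x ⬝ᵥ x) = x ⬝ᵥ A.mulVec x := by
    rw [hxe]
    simp [dotProduct_smul, mul_comm, hA]
  have step2 : x ⬝ᵥ A.mulVec x ≤ ∑ u, ∑ v, A u v * (|x u| * |x v|) := by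
    rw [dotProduct]
    have expand : ∀ u : W, x u * A.mulVec x u = ∑ v, A u v * (x u * x v) := by
      intro u
      rw [Matrix.mulVec, dotProduct, Finset.mul_sum]
      exact Finset.sum_congr rfl fun v _ => by ring
    rw [Finset.sum_congr rfl fun u _ => expand u]
    apply Finset.sum_le_sum
    intro u _
    apply Finset.sum_le_sum
    intro v _
    calc A u v * (x u * x v) ≤ A u v * |x u * x v| :=
          mul_le_mul_of_nonneg_left (le_abs_self _) (hAnn u v)
      _ = A u v * (|x u| * |x v|) := by rw [abs_mul]
  have step3 : ∑ u, ∑ v, A u v * (|x u| * |x v|) ≤ ∑ u, ∑ v, B (φ u) (φ v) * (y (φ u) * y (φ v)) := by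
    apply Finset.sum_le_sum
    intro u _
    apply Finset.sum_le_sum
    intro v _
    rw [hyφ, hyφ]
    exact mul_le_mul_of_nonneg_right (hAB u v) (by positivity)
  have step4 : ∑ u, ∑ v, B (φ u) (φ v) * (y (φ u) * y (φ v)) ≤ y ⬝ᵥ B.mulVec y := by
    have expand : y ⬝ᵥ B.mulVec y = ∑ a, ∑ b, B a b * (y a * y b) := by
      rw [dotProduct]
      apply Finset.sum_congr rfl
      intro a _
      rw [Matrix.mulVec, dotProduct, Finset.mul_sum]
      exact Finset.sum_congr rfl fun b _ => by ring
    rw [expand]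
    have houter : ∀ a : V, a ∉ Set.range φ → ∑ b, B a b * (y a * y b) = 0 := by
      intro a ha
      apply Finset.sum_eq_zero
      intro b _
      rw [hyout a ha]
      ring
    rw [himg _ houter]
    apply Finset.sum_le_sum
    intro u _
    have hinner : ∀ b : V, b ∉ Set.range φ → B (φ u) b * (y (φ u) * y b) = 0 := by
      intro b hb
      rw [hyout b hb]
      ring
    rw [himg (fun b => B (φ u) b * (y (φ u) * y b)) hinner]
  have step5 : y ⬝ᵥ B.mulVec y ≤ eig B 1 * (y ⬝ᵥ y) :=
    quad_form_le (adjMat_isHermitian G) y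
  have final : eig A 1 * (x ⬝ᵥ x) ≤ eig B 1 * (x ⬝ᵥ x) := by
    calc eig A 1 * (x ⬝ᵥ x) = x ⬝ᵥ A.mulVec x := step1
      _ ≤ ∑ u, ∑ v, A u v * (|x u| * |x v|) := step2
      _ ≤ ∑ u, ∑ v, B (φ u) (φ v) * (y (φ u) * y (φ v)) := step3
      _ ≤ y ⬝ᵥ B.mulVec y := step4
      _ ≤ eig B 1 * (y ⬝ᵥ y) := step5
      _ = eig B 1 * (x ⬝ᵥ x) := by rw [hyy]
  exact le_of_mul_le_mul_right final hxx

namespace SimpleGraph.Walk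
variable {V : Type*} {G : SimpleGraph V}

lemma length_drop' {u v : V} (p : G.Walk u v) (n : ℕ) :
    (p.drop n).length = p.length - n := by
  induction p generalizing n with
  | nil => simp [drop]
  | cons h q ih =>
    cases n with
    | zero => simp [drop]
    | succ n => simp [drop, ih]

lemma support_getElem_eq_getVert' {u v : V} (p : G.Walk u v) (i : ℕ)
    (h : i < p.support.length) : p.support[i] = p.getVert i := by
  induction p generalizing i with
  | nil =>
    have h0 : i = 0 := by simpa [support_nil] using h
    subst h0; simp [support_nil]
  | cons ha q ih =>
    cases i with
    | zero => simp [support_cons]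
    | succ i =>
      simp only [support_cons, List.getElem_cons_succ, getVert_cons_succ]
      exact ih i (by simp only [support_cons, List.length_cons] at h; omega)

lemma length_rotate' [DecidableEq V] {u v : V} (c : G.Walk v v) (h : u ∈ c.support) :
    (c.rotate u h).length = c.length := by
  have h1 := congrArg SimpleGraph.Walk.length (c.take_spec h)
  rw [length_append] at h1
  show ((c.dropUntil u h).append (c.takeUntil u h)).length = c.length
  rw [length_append]
  omega

lemma IsCycle.getVert_injOn'' {v : V} {c : G.Walk v v} (hc : c.IsCycle)
    {i j : ℕ} (hi : i < c.length) (hj : j < c.length)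
    (hij : c.getVert i = c.getVert j) : i = j := by
  have h3 := hc.three_le_length
  have hnodup := hc.support_nodup  -- c.support.tail.Nodup
  have hlen : c.support.length = c.length + 1 := length_support c
  have htail : c.support.tail.length = c.length := by
    rw [List.length_tail, hlen]; omega
  -- getVert k for 1 ≤ k ≤ length equals tail[k-1]
  have hGV : ∀ k (_ : 1 ≤ k) (_ : k ≤ c.length), c.getVert k = c.support.tail[k - 1]'(by omega) := by
    intro k h1 h2
    have : c.support[k]'(by omega) = c.getVert k := support_getElem_eq_getVert' c k (by omega)
    rw [← this]
    obtain ⟨k', rfl⟩ : ∃ k', k = k' + 1 := ⟨k - 1, by omega⟩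
    simp [List.getElem_tail]
  -- normalize index 0 to length
  set i' := if i = 0 then c.length else i with hi'
  set j' := if j = 0 then c.length else j with hj'
  have hgi : c.getVert i' = c.getVert i := by
    rw [hi']; split
    · rename_i h; rw [h, getVert_zero, getVert_length]
    · rfl
  have hgj : c.getVert j' = c.getVert j := by
    rw [hj']; split
    · rename_i h; rw [h, getVert_zero, getVert_length]
    · rfl
  have hi1 : 1 ≤ i' ∧ i' ≤ c.length := by rw [hi']; split <;> omega
  have hj1 : 1 ≤ j' ∧ j' ≤ c.length := by rw [hj']; split <;> omega
  have : c.support.tail[i' - 1]'(by omega) = c.support.tail[j' - 1]'(by omega) := by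
    rw [← hGV i' hi1.1 hi1.2, ← hGV j' hj1.1 hj1.2, hgi, hgj, hij]
  have := List.Nodup.getElem_inj_iff hnodup |>.mp this
  rw [hi', hj'] at this
  split at this <;> split at this <;> omega

end SimpleGraph.Walk

open SimpleGraph SimpleGraph.Walk in
lemma cycleWithPath_embeds {V : Type*} [DecidableEq V] {G : SimpleGraph V} (hG : G.Connected)
    {g m : ℕ} {w u : V} (p : G.Walk w w) (hc : p.IsCycle) (hlen : p.length = g)
    (hgm : 2 * m + 1 ≤ g)
    (hfar : ∀ x ∈ p.support, m ≤ G.dist u x) :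
    ∃ φ : cycleWithPath g m →g G, Function.Injective φ := by
  classical
  have hg3 : 3 ≤ g := hlen ▸ hc.three_le_length
  -- choose x₀ minimizing distance to u
  obtain ⟨x₀, hx₀sup', hx₀min'⟩ :=
    Finset.exists_min_image p.support.toFinset (fun x => G.dist u x)
      ⟨w, by simp [List.mem_toFinset]⟩
  rw [List.mem_toFinset] at hx₀sup'
  have hx₀min : ∀ x ∈ p.support, G.dist u x₀ ≤ G.dist u x := by
    intro x hx
    exact hx₀min' x (List.mem_toFinset.mpr hx)
  set d := G.dist u x₀ with hd
  have hdm : m ≤ d := hfar _ hx₀sup'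
  obtain ⟨q, hq⟩ := hG.exists_walk_length_eq_dist u x₀
  set r : G.Walk x₀ u := q.reverse with hr
  have hrlen : r.length = d := by rw [hr, length_reverse, hq]
  -- the rotated cycle
  set c : G.Walk x₀ x₀ := p.rotate x₀ hx₀sup' with hcdef
  have hcc : c.IsCycle := hc.rotate hx₀sup'
  have hclen : c.length = g := by rw [hcdef, length_rotate', hlen]
  have closed_mem : ∀ {y : V} (cw : G.Walk y y), ¬cw.Nil → ∀ x,
      (x ∈ cw.support ↔ x ∈ cw.support.tail) := by
    intro y cw hnil x
    have hlpos : 0 < cw.length := not_nil_iff_lt_length.mp hnil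
    have htne : cw.support.tail ≠ [] := by
      apply List.ne_nil_of_length_pos
      rw [List.length_tail, length_support]
      omega
    constructor
    · intro hx
      rw [support_eq_cons] at hx
      rcases List.mem_cons.mp hx with rfl | h
      · have hidx : cw.length - 1 < cw.support.tail.length := by
          rw [List.length_tail, length_support]; omega
        have h2 : cw.support.tail[cw.length - 1]'hidx
            = cw.support[cw.length - 1 + 1]'(by rw [length_support]; omega) :=
          List.getElem_tail _
        have h3 : cw.support[cw.length - 1 + 1]'(by rw [length_support]; omega)
            = cw.getVert (cw.length - 1 + 1) :=
          support_getElem_eq_getVert' cw _ _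
        have h4 : cw.getVert (cw.length - 1 + 1) = x := by
          rw [show cw.length - 1 + 1 = cw.length by omega]
          exact getVert_length cw
        have h5 := List.getElem_mem hidx
        rw [h2, h3, h4] at h5
        exact h5
      · exact h
    · intro hx
      rw [support_eq_cons]
      exact List.mem_cons_of_mem _ hx
  have hcsup : ∀ x, x ∈ c.support ↔ x ∈ p.support := by
    intro x
    rw [closed_mem c hcc.not_nil x, closed_mem p hc.not_nil x]
    exact (support_rotate p x₀ hx₀sup').mem_iff
  -- distances along r
  have hdist : ∀ j, j ≤ d → G.dist u (r.getVert j) = d - j := by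
    intro j hj
    have hub : G.dist (r.getVert j) u ≤ d - j := by
      have := (r.drop j).edist_le  -- maybe wrong, use dist_le
      have h2 : G.dist (r.getVert j) u ≤ (r.drop j).length := dist_le (r.drop j)
      rwa [length_drop', hrlen] at h2
    have hlb : d ≤ G.dist u (r.getVert j) + j := by
      have hrq : r.getVert j = q.getVert (q.length - j) := by
        rw [hr, getVert_reverse]
      have h2 : G.dist (r.getVert j) x₀ ≤ j := by
        have h3 : G.dist (q.getVert (q.length - j)) x₀ ≤ (q.drop (q.length - j)).length :=
          dist_le (q.drop (q.length - j))
        rw [length_drop'] at h3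
        rw [hrq]
        refine h3.trans ?_
        rw [hq]
        omega
      calc d = G.dist u x₀ := hd
        _ ≤ G.dist u (r.getVert j) + G.dist (r.getVert j) x₀ := hG.dist_triangle
        _ ≤ G.dist u (r.getVert j) + j := by omega
    rw [G.dist_comm] at hub
    omega
  have hnotin : ∀ j, 1 ≤ j → j ≤ d → r.getVert j ∉ p.support := by
    intro j h1 h2 hmem
    have := hx₀min _ hmem
    rw [hdist j h2] at this
    omega
  -- the map
  set f : Fin g ⊕ Fin m → V := fun z =>
    match z with
    | Sum.inl i => c.getVert i
    | Sum.inr j => r.getVert (j + 1) with hf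
  have hinj : Function.Injective f := by
    rintro (i | i) (j | j) hab
    · have := hcc.getVert_injOn'' (by rw [hclen]; exact i.isLt) (by rw [hclen]; exact j.isLt) hab
      exact congrArg Sum.inl (Fin.ext this)
    · exfalso
      have hi := i.isLt
      have hj := j.isLt
      have hmem : c.getVert i ∈ c.support :=
        mem_support_iff_exists_getVert.mpr ⟨i, rfl, by omega⟩
      refine hnotin (j + 1) (by omega) (by omega) ((hcsup _).mp ?_)
      show f (Sum.inr j) ∈ c.support
      rw [← hab]
      exact hmem
    · exfalso
      have hi := i.isLt
      have hj := j.isLt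
      have hmem : c.getVert j ∈ c.support :=
        mem_support_iff_exists_getVert.mpr ⟨j, rfl, by omega⟩
      refine hnotin (i + 1) (by omega) (by omega) ((hcsup _).mp ?_)
      show f (Sum.inr i) ∈ c.support
      rw [hab]
      exact hmem
    · have hi := i.isLt
      have hj := j.isLt
      have h1 := hdist (i + 1) (by omega)
      have h2 := hdist (j + 1) (by omega)
      have hab' : r.getVert (↑i + 1) = r.getVert (↑j + 1) := hab
      rw [hab'] at h1
      exact congrArg Sum.inr (Fin.ext (by omega))
  have main : ∀ (a b : Fin g ⊕ Fin m), a ≠ b →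
      (match a, b with
        | Sum.inl i, Sum.inl j => (j : ℕ) = ((i : ℕ) + 1) % g
        | Sum.inl i, Sum.inr j => (i : ℕ) = 0 ∧ (j : ℕ) = 0
        | Sum.inr i, Sum.inr j => (j : ℕ) = (i : ℕ) + 1
        | _, _ => False) →
      G.Adj (f a) (f b) := by
    rintro (i | i) (j | j) hne hrel
    · -- cycle edge
      have hi := i.isLt
      have hj := j.isLt
      have hrel' : (j : ℕ) = ((i : ℕ) + 1) % g := hrel
      show G.Adj (c.getVert i) (c.getVert j)
      rcases Nat.lt_or_ge ((i : ℕ) + 1) g with h | h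
      · rw [Nat.mod_eq_of_lt h] at hrel'
        rw [hrel']
        exact c.adj_getVert_succ (by omega)
      · -- i = g - 1, j = 0
        have hig : (i : ℕ) = g - 1 := by omega
        have hjg : (j : ℕ) = 0 := by
          rw [hrel', show (i : ℕ) + 1 = g by omega, Nat.mod_self]
        rw [hig, hjg]
        have := c.adj_getVert_succ (i := g - 1) (by omega)
        rw [show g - 1 + 1 = g by omega, ← hclen, getVert_length, hclen] at this
        have h0 : c.getVert 0 = x₀ := getVert_zero c
        rwa [h0]
    · -- joint edge
      obtain ⟨hi0, hj0⟩ : (i : ℕ) = 0 ∧ (j : ℕ) = 0 := hrel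
      have hm1 : 1 ≤ m := by omega
      show G.Adj (c.getVert i) (r.getVert (j + 1))
      rw [hi0, hj0, getVert_zero]
      have := r.adj_getVert_succ (i := 0) (by omega)
      rwa [getVert_zero] at this
    · exact absurd hrel (by simp)
    · -- path edge
      have hj := j.isLt
      have hrel' : (j : ℕ) = (i : ℕ) + 1 := hrel
      show G.Adj (r.getVert (i + 1)) (r.getVert (j + 1))
      rw [hrel']
      exact r.adj_getVert_succ (by omega)
  refine ⟨⟨f, ?_⟩, hinj⟩
  intro a b hab
  rw [cycleWithPath, SimpleGraph.fromRel_adj] at hab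
  obtain ⟨hne, h | h⟩ := hab
  · exact main a b hne h
  · exact (main b a hne.symm h).symm

lemma spider_embeds (g m : ℕ) (hg : 2 * m + 1 ≤ g) (hg3 : 3 ≤ g) :
    ∃ ψ : spider m →g cycleWithPath g m, Function.Injective ψ := by
  have hm1 : m + 1 < g := by omega
  set f : Option (Fin 3 × Fin m) → Fin g ⊕ Fin m := fun v =>
    match v with
    | none => Sum.inl ⟨0, by omega⟩
    | some (i, j) =>
        if i.val = 0 then Sum.inl ⟨j.val + 1, by omega⟩
        else if i.val = 1 then Sum.inl ⟨g - 1 - j.val, by omega⟩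
        else Sum.inr j with hf
  have hinj : Function.Injective f := by
    rintro (_ | ⟨i, j⟩) (_ | ⟨i', j'⟩) hab
    · rfl
    · have hj := j'.isLt
      fin_cases i' <;> simp_all [f] <;> omega
    · have hj := j.isLt
      fin_cases i <;> simp_all [f] <;> omega
    · have hj := j.isLt
      have hj' := j'.isLt
      fin_cases i <;> fin_cases i' <;> simp_all [f] <;> omega
  have main : ∀ (u v : Option (Fin 3 × Fin m)), u ≠ v →
      (match u, v with
        | none, some (_, j) => (j : ℕ) = 0
        | some (i, j), some (i', j') => i = i' ∧ (j' : ℕ) = (j : ℕ) + 1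
        | _, _ => False) →
      (cycleWithPath g m).Adj (f u) (f v) := by
    rintro (_ | ⟨i, j⟩) (_ | ⟨i', j'⟩) hne hr
    · exact absurd hr (by simp)
    · -- none to some(i', j'), j' = 0
      have hj' := j'.isLt
      have hr' : (j' : ℕ) = 0 := hr
      rw [cycleWithPath, SimpleGraph.fromRel_adj]
      refine ⟨hinj.ne hne, ?_⟩
      fin_cases i' <;> simp only [f] <;> norm_num
      · left; rw [Nat.mod_eq_of_lt (by omega)]; omega
      · right; rw [hr', Nat.sub_zero, Nat.sub_add_cancel (by omega : 1 ≤ g), Nat.mod_self]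
      · exact hr'
    · exact absurd hr (by simp)
    · have hj := j.isLt
      have hj' := j'.isLt
      obtain ⟨rfl, hsucc⟩ : i = i' ∧ (j' : ℕ) = (j : ℕ) + 1 := hr
      rw [cycleWithPath, SimpleGraph.fromRel_adj]
      refine ⟨hinj.ne hne, ?_⟩
      fin_cases i <;> simp only [f] <;> norm_num
      · left; rw [Nat.mod_eq_of_lt (by omega)]; omega
      · right; rw [Nat.mod_eq_of_lt (by omega)]; omega
      · left; omega
  refine ⟨⟨f, ?_⟩, hinj⟩
  intro u v huv
  rw [spider, SimpleGraph.fromRel_adj] at huv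
  obtain ⟨hne, h | h⟩ := huv
  · exact main u v hne h
  · exact (main v u hne.symm h).symm

/-- If `G` is connected with girth `g ≥ 2m+1`, cyclomatic number at least
`1`, and there is a vertex at distance at least `m` from some shortest cycle, then `G`
contains `H(g,m)` as a subgraph, and hence `λ₁(G) ≥ λ₁(T(m,m,m))`. -/
theorem contains_cycle_with_path {V : Type*} [Fintype V] [DecidableEq V]
    (G : SimpleGraph V) (hG : G.Connected) (g m : ℕ)
    (hgirth : G.girth = (g : ℕ∞)) (hg : 2 * m + 1 ≤ g) (hcyc : 1 ≤ cyclomatic G)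
    (hfar : ∃ (u w : V) (p : G.Walk w w), p.IsCycle ∧ p.length = g ∧
      ∀ x ∈ p.support, m ≤ G.dist u x) :
    (∃ φ : cycleWithPath g m →g G, Function.Injective φ) ∧
      graphEig (spider m) 1 ≤ graphEig G 1 := by
  obtain ⟨u, w, p, hcyc, hplen, hdistfar⟩ := hfar
  have hg3 : 3 ≤ g := hplen ▸ hcyc.three_le_length
  obtain ⟨φ₁, hφ₁⟩ := cycleWithPath_embeds hG p hcyc hplen hg hdistfar
  obtain ⟨ψ, hψ⟩ := spider_embeds g m hg hg3
  have hne : Nonempty (Fin g ⊕ Fin m) := ⟨Sum.inl ⟨0, by omega⟩⟩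
  refine ⟨⟨φ₁, hφ₁⟩, ?_⟩
  calc graphEig (spider m) 1 ≤ graphEig (cycleWithPath g m) 1 :=
        graphEig_mono _ _ ψ hψ
    _ ≤ graphEig G 1 := graphEig_mono _ _ φ₁ hφ₁
end
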